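/- Let X be a real Hilbert space and C ⊆ X a set that is Φ_lsc-separated: for every p ∉ C there exist a ≥ 0, u ∈ X, c ∈ ℝ such that -a‖p‖² + ⟨u,p⟩ + c > 0 and -a‖y‖² + ⟨u,y⟩ + c ≤ 0 for all y ∈ C. Then for any y₀ ∈ X: sup over (a,u) ∈ ℝ₊ × X of [(-a‖y₀‖² + ⟨u,y₀⟩) - sup_{y∈C}(-a‖y‖² + ⟨u,y⟩)] equals 0 if y₀ ∈ C and +∞ if y₀ ∉ C. -/

import Mathlib

open scoped Classical in
theorem sup_quadratic_separation_eq_indicator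
    {X : Type*} [NormedAddCommGroup X] [InnerProductSpace ℝ X] [CompleteSpace X]
    (C : Set X) (hCne : C.Nonempty)
    (hsep : ∀ p : X, p ∉ C → ∃ (a : ℝ) (u : X) (c : ℝ), 0 ≤ a ∧
      0 < -a * ‖p‖ ^ 2 + inner ℝ u p + c ∧
      ∀ y ∈ C, -a * ‖y‖ ^ 2 + inner ℝ u y + c ≤ 0)
    (y₀ : X) :
    (⨆ au : {a : ℝ // 0 ≤ a} × X,
        (((-(au.1.1) * ‖y₀‖ ^ 2 + inner ℝ au.2 y₀ : ℝ) : EReal) -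
          ⨆ y : C, ((-(au.1.1) * ‖(y : X)‖ ^ 2 + inner ℝ au.2 (y : X) : ℝ) : EReal))) =
      (if y₀ ∈ C then (0 : EReal) else ⊤) := by
  by_cases hy : y₀ ∈ C
  · simp only [if_pos hy]
    apply le_antisymm
    · apply iSup_le
      intro au
      have h1 : ((-(au.1.1) * ‖y₀‖ ^ 2 + inner ℝ au.2 y₀ : ℝ) : EReal) ≤
          ⨆ y : C, ((-(au.1.1) * ‖(y : X)‖ ^ 2 + inner ℝ au.2 (y : X) : ℝ) : EReal) :=
        le_iSup (fun y : C =>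
          ((-(au.1.1) * ‖(y : X)‖ ^ 2 + inner ℝ au.2 (y : X) : ℝ) : EReal)) (⟨y₀, hy⟩ : C)
      calc ((-(au.1.1) * ‖y₀‖ ^ 2 + inner ℝ au.2 y₀ : ℝ) : EReal) -
            ⨆ y : C, ((-(au.1.1) * ‖(y : X)‖ ^ 2 + inner ℝ au.2 (y : X) : ℝ) : EReal)
          ≤ ((-(au.1.1) * ‖y₀‖ ^ 2 + inner ℝ au.2 y₀ : ℝ) : EReal) -
            ((-(au.1.1) * ‖y₀‖ ^ 2 + inner ℝ au.2 y₀ : ℝ) : EReal) :=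
            EReal.sub_le_sub le_rfl h1
        _ = 0 := by rw [← EReal.coe_sub]; norm_num
    · have h0 : (0 : EReal) = ((-(((⟨⟨0, le_refl 0⟩, 0⟩ :
          {a : ℝ // 0 ≤ a} × X)).1.1) * ‖y₀‖ ^ 2 +
          inner ℝ ((⟨⟨0, le_refl 0⟩, (0 : X)⟩ : {a : ℝ // 0 ≤ a} × X)).2 y₀ : ℝ) : EReal) -
          ⨆ y : C, ((-(((⟨⟨0, le_refl 0⟩, (0 : X)⟩ : {a : ℝ // 0 ≤ a} × X)).1.1) * ‖(y : X)‖ ^ 2 +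
            inner ℝ ((⟨⟨0, le_refl 0⟩, (0 : X)⟩ : {a : ℝ // 0 ≤ a} × X)).2 (y : X) : ℝ) : EReal) := by
        haveI : Nonempty C := ⟨⟨hCne.some, hCne.some_mem⟩⟩
        simp
      rw [h0]
      exact le_iSup (fun au : {a : ℝ // 0 ≤ a} × X =>
        (((-(au.1.1) * ‖y₀‖ ^ 2 + inner ℝ au.2 y₀ : ℝ) : EReal) -
          ⨆ y : C, ((-(au.1.1) * ‖(y : X)‖ ^ 2 + inner ℝ au.2 (y : X) : ℝ) : EReal)))
        (⟨⟨0, le_refl 0⟩, 0⟩ : {a : ℝ // 0 ≤ a} × X)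
  · simp only [if_neg hy]
    obtain ⟨a, u, c, ha, hp, hC⟩ := hsep y₀ hy
    set ε : ℝ := -a * ‖y₀‖ ^ 2 + inner ℝ u y₀ + c with hε
    have hεpos : 0 < ε := hp
    rw [iSup_eq_top]
    intro b hb
    obtain ⟨M, hbM, _⟩ := EReal.exists_between_coe_real hb
    set t : ℝ := max ((M + 1) / ε) 1 with ht
    have ht1 : (1 : ℝ) ≤ t := le_max_right _ _
    have ht0 : 0 ≤ t := le_trans zero_le_one ht1
    refine ⟨⟨⟨t * a, mul_nonneg ht0 ha⟩, t • u⟩, ?_⟩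
    have hSle : (⨆ y : C, ((-(t * a) * ‖(y : X)‖ ^ 2 + inner ℝ (t • u) (y : X) : ℝ) : EReal)) ≤
        ((-(t * c) : ℝ) : EReal) := by
      apply iSup_le
      intro y
      rw [EReal.coe_le_coe_iff]
      have := hC y y.2
      have h2 : -(t * a) * ‖(y : X)‖ ^ 2 + inner ℝ (t • u) (y : X) =
          t * (-a * ‖(y : X)‖ ^ 2 + inner ℝ u (y : X)) := by
        rw [real_inner_smul_left]; ring
      rw [h2]
      nlinarith [mul_nonneg ht0 (neg_nonneg.mpr this)]
    have hiy₀ : -(t * a) * ‖y₀‖ ^ 2 + inner ℝ (t • u) y₀ = t * (-a * ‖y₀‖ ^ 2 + inner ℝ u y₀) := by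
      rw [real_inner_smul_left]; ring
    have key : ((t * (-a * ‖y₀‖ ^ 2 + inner ℝ u y₀) - (-(t * c)) : ℝ) : EReal) ≤
        ((-(t * a) * ‖y₀‖ ^ 2 + inner ℝ (t • u) y₀ : ℝ) : EReal) -
          ⨆ y : C, ((-(t * a) * ‖(y : X)‖ ^ 2 + inner ℝ (t • u) (y : X) : ℝ) : EReal) := by
      rw [EReal.coe_sub, hiy₀]
      exact EReal.sub_le_sub le_rfl hSle
    refine lt_of_lt_of_le (lt_of_lt_of_le hbM ?_) key
    rw [EReal.coe_le_coe_iff]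
    have h3 : t * (-a * ‖y₀‖ ^ 2 + inner ℝ u y₀) - -(t * c) = t * ε := by
      rw [hε]; ring
    rw [h3]
    have h4 : (M + 1) / ε ≤ t := le_max_left _ _
    have h5 : M + 1 ≤ t * ε := by
      rw [div_le_iff₀ hεpos] at h4; linarith
    linarith
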